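/- Let n, m be positive integers, let U ⊆ ℝ^n be a connected open set, let f : U → ℝ^m be Lipschitz, and let T : ℝ^n → ℝ^m be a linear map such that for Lebesgue-almost every x ∈ U, f is differentiable at x with total derivative equal to T. If x₀ ∈ U and f(x₀) = y₀, then f(x) = T(x − x₀) + y₀ for all x ∈ U. -/

import Mathlib

open MeasureTheory Metric Set Filter
open scoped ENNReal NNReal

noncomputable section

set_option linter.unusedVariables false

lemma lip1d_le {K : ℝ≥0} {φ : ℝ → ℝ} (hφ : LipschitzWith K φ)
    (h : ∀ᵐ t, t ∈ Ioo (0:ℝ) 1 → HasDerivAt φ 0 t) : φ 0 ≤ φ 1 := by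
  set ψ : ℝ → ℝ := fun t => φ t + K * t with hψdef
  have hψmono : Monotone ψ := by
    intro s t hst
    have h2 : φ s - φ t ≤ K * |s - t| := by
      have h3 := hφ.dist_le_mul s t
      rw [Real.dist_eq, Real.dist_eq] at h3
      calc φ s - φ t ≤ |φ s - φ t| := le_abs_self _
        _ ≤ K * |s - t| := h3
    have : φ s - φ t ≤ K * (t - s) := by
      rwa [abs_sub_comm, abs_of_nonneg (by linarith)] at h2
    simp only [hψdef]
    nlinarith
  have hψcont : Continuous ψ := hφ.continuous.add (continuous_const.mul continuous_id)
  set μ := hψmono.stieltjesFunction.measure with hμdef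
  have hsf : ∀ t, hψmono.stieltjesFunction t = ψ t := by
    intro t
    rw [Monotone.stieltjesFunction_eq]
    exact rightLim_eq_of_tendsto (h := nhdsGT_neBot t)
      ((hψcont.tendsto t).mono_left nhdsWithin_le_nhds)
  have hψd : ∀ᵐ t, t ∈ Ioo (0:ℝ) 1 → HasDerivAt ψ K t := by
    filter_upwards [h] with t ht htI
    exact (ht htI).add ((hasDerivAt_id t).const_mul (K:ℝ)) |>.congr_deriv (by ring)
  have hrn : ∀ᵐ t, t ∈ Ioo (0:ℝ) 1 → (μ.rnDeriv volume t).toReal = K := by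
    filter_upwards [hψd, hψmono.ae_hasDerivAt] with t ht h't htI
    rw [hμdef]; exact h't.unique (ht htI)
  have hμIoo : μ (Ioo (0:ℝ) 1) ≠ ⊤ := by
    refine ne_of_lt (lt_of_le_of_lt (measure_mono Ioo_subset_Ioc_self) ?_)
    rw [hμdef, StieltjesFunction.measure_Ioc]
    exact ENNReal.ofReal_lt_top
  have key : (K : ℝ) ≤ ψ 1 - ψ 0 := by
    have h1 : ∫ t in Ioo (0:ℝ) 1, (μ.rnDeriv volume t).toReal ≤ (μ (Ioo (0:ℝ) 1)).toReal :=
      Measure.setIntegral_toReal_rnDeriv_le hμIoo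
    have h2 : ∫ t in Ioo (0:ℝ) 1, (μ.rnDeriv volume t).toReal = (K : ℝ) := by
      rw [setIntegral_congr_ae measurableSet_Ioo hrn]
      simp
    have h3 : (μ (Ioo (0:ℝ) 1)).toReal ≤ ψ 1 - ψ 0 := by
      have hle : μ (Ioo (0:ℝ) 1) ≤ μ (Ioc 0 1) := measure_mono Ioo_subset_Ioc_self
      have h4 : μ (Ioc (0:ℝ) 1) = ENNReal.ofReal (ψ 1 - ψ 0) := by
        rw [hμdef, StieltjesFunction.measure_Ioc, hsf, hsf]
      calc (μ (Ioo (0:ℝ) 1)).toReal ≤ (μ (Ioc (0:ℝ) 1)).toReal :=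
            ENNReal.toReal_mono (by rw [h4]; exact ENNReal.ofReal_ne_top) hle
        _ ≤ ψ 1 - ψ 0 := by
            rw [h4, ENNReal.toReal_ofReal (by linarith [hψmono (zero_le_one (α := ℝ))])]
    linarith [h2 ▸ h1]
  simp only [hψdef] at key
  linarith

lemma lip1d {K : ℝ≥0} {φ : ℝ → ℝ} (hφ : LipschitzWith K φ)
    (h : ∀ᵐ t, t ∈ Ioo (0:ℝ) 1 → HasDerivAt φ 0 t) : φ 1 = φ 0 := by
  have h1 := lip1d_le hφ h
  have h2 := lip1d_le hφ.neg
    (by filter_upwards [h] with t ht htI; exact ((ht htI).neg).congr_deriv (by ring))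
  simp only [Pi.neg_apply] at h2
  linarith

lemma coord_le_norm {m : ℕ} (u : EuclideanSpace ℝ (Fin m)) (i : Fin m) : |u i| ≤ ‖u‖ := by
  rw [EuclideanSpace.norm_eq, ← Real.sqrt_sq_eq_abs]
  apply Real.sqrt_le_sqrt
  have := Finset.single_le_sum (f := fun j => ‖u j‖ ^ 2) (fun j _ => sq_nonneg _) (Finset.mem_univ i)
  simpa [Real.norm_eq_abs, sq_abs] using this

lemma local_const {n m : ℕ} {U : Set (EuclideanSpace ℝ (Fin n))} (hUopen : IsOpen U)
    {g : EuclideanSpace ℝ (Fin n) → EuclideanSpace ℝ (Fin m)} (K : ℝ≥0)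
    (hg : ∀ a ∈ U, ∀ b ∈ U, ‖g a - g b‖ ≤ K * ‖a - b‖)
    (hgc : ContinuousOn g U)
    (hgd : ∀ᵐ w : EuclideanSpace ℝ (Fin n) ∂volume, w ∈ U → HasFDerivAt g (0 : EuclideanSpace ℝ (Fin n) →L[ℝ] EuclideanSpace ℝ (Fin m)) w)
    {x : EuclideanSpace ℝ (Fin n)} {ε : ℝ} (hε : 0 < ε) (hball : ball x ε ⊆ U) :
    ∀ y ∈ ball x ε, g y = g x := by
  intro y hy
  set v : EuclideanSpace ℝ (Fin n) := y - x with hvdef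
  have hv : ‖v‖ < ε := by simpa [hvdef, dist_eq_norm] using mem_ball.mp hy
  have hvnn : (0:ℝ) ≤ ‖v‖ := norm_nonneg _
  set δ : ℝ := (ε - ‖v‖) / 2 with hδdef
  have hδ : 0 < δ := by simp only [hδdef]; linarith
  -- null measurable superset of bad points
  set N0 : Set (EuclideanSpace ℝ (Fin n)) := {w | ¬ (w ∈ U → HasFDerivAt g (0 : EuclideanSpace ℝ (Fin n) →L[ℝ] EuclideanSpace ℝ (Fin m)) w)} with hN0def
  have hN00 : volume N0 = 0 := hgd
  set N' : Set (EuclideanSpace ℝ (Fin n)) := toMeasurable volume N0 with hN'def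
  have hN'meas : MeasurableSet N' := measurableSet_toMeasurable _ _
  have hN'0 : volume N' = 0 := by rw [hN'def, measure_toMeasurable]; exact hN00
  have hN' : ∀ w, w ∉ N' → w ∈ U → HasFDerivAt g (0 : EuclideanSpace ℝ (Fin n) →L[ℝ] EuclideanSpace ℝ (Fin m)) w := by
    intro w hw hwU
    by_contra hc
    exact hw (subset_toMeasurable _ _ (by simp [hN0def, hwU, hc]))
  -- Fubini
  set S : Set (ℝ × EuclideanSpace ℝ (Fin n)) := {p | x + p.2 + p.1 • v ∈ N'} with hSdef
  have hcontmap : Continuous fun p : ℝ × EuclideanSpace ℝ (Fin n) => x + p.2 + p.1 • v := by fun_prop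
  have hSm : MeasurableSet S := hN'meas.preimage hcontmap.measurable
  have hS0 : (volume.prod volume : Measure (ℝ × EuclideanSpace ℝ (Fin n))) S = 0 := by
    rw [Measure.measure_prod_null hSm]
    refine ae_of_all _ fun t => ?_
    have hslice : (Prod.mk t ⁻¹' S) = (fun z : EuclideanSpace ℝ (Fin n) => (x + t • v) + z) ⁻¹' N' := by
      ext z
      simp only [hSdef, mem_preimage, mem_setOf_eq]
      have he : x + z + t • v = x + t • v + z := by abel
      rw [he]
    simp [hslice, measure_preimage_add, hN'0]
  have hSwm : MeasurableSet (Prod.swap ⁻¹' S : Set (EuclideanSpace ℝ (Fin n) × ℝ)) := hSm.preimage measurable_swap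
  have hSw0 : (volume.prod volume : Measure (EuclideanSpace ℝ (Fin n) × ℝ)) (Prod.swap ⁻¹' S) = 0 := by
    have h1 : (Measure.map Prod.swap ((volume : Measure (EuclideanSpace ℝ (Fin n))).prod (volume : Measure ℝ))) S
        = (volume.prod volume : Measure (EuclideanSpace ℝ (Fin n) × ℝ)) (Prod.swap ⁻¹' S) :=
      Measure.map_apply measurable_swap hSm
    rw [Measure.prod_swap] at h1
    rw [← h1, hS0]
  have hG : ∀ᵐ z : EuclideanSpace ℝ (Fin n) ∂volume, volume {t : ℝ | x + z + t • v ∈ N'} = 0 := by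
    have h2 := (Measure.measure_prod_null hSwm).mp hSw0
    filter_upwards [h2] with z hz
    simpa [Set.preimage, hSdef] using hz
  -- key step for good z
  have key : ∀ z : EuclideanSpace ℝ (Fin n), volume {t : ℝ | x + z + t • v ∈ N'} = 0 → ‖z‖ < δ →
      g (x + z + v) = g (x + z) := by
    intro z hz hzδ
    have memU : ∀ t ∈ Icc (0:ℝ) 1, x + z + t • v ∈ U := by
      intro t ht
      apply hball
      rw [mem_ball, dist_eq_norm]
      have he : x + z + t • v - x = z + t • v := by abel
      rw [he]
      calc ‖z + t • v‖ ≤ ‖z‖ + ‖t • v‖ := norm_add_le _ _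
        _ = ‖z‖ + |t| * ‖v‖ := by rw [norm_smul, Real.norm_eq_abs]
        _ ≤ δ + 1 * ‖v‖ := by
            have : |t| ≤ 1 := abs_le.2 ⟨by linarith [ht.1], ht.2⟩
            have := mul_le_mul_of_nonneg_right this hvnn
            linarith
        _ < ε := by simp only [hδdef]; linarith
    have hcoord : ∀ i : Fin m, g (x + z + v) i = g (x + z) i := by
      intro i
      set φ : ℝ → ℝ := fun t => g (x + z + t • v) i with hφdef
      have hφlip : LipschitzOnWith (K * ‖v‖₊) φ (Icc 0 1) := by
        apply LipschitzOnWith.of_dist_le_mul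
        intro s hs t ht
        have h1 : dist (φ s) (φ t) = |(g (x + z + s • v) - g (x + z + t • v)) i| := by
          simp [hφdef, Real.dist_eq, PiLp.sub_apply]
        rw [h1]
        calc |(g (x + z + s • v) - g (x + z + t • v)) i|
            ≤ ‖g (x + z + s • v) - g (x + z + t • v)‖ := coord_le_norm _ i
          _ ≤ K * ‖(x + z + s • v) - (x + z + t • v)‖ := hg _ (memU s hs) _ (memU t ht)
          _ = K * (‖v‖ * |s - t|) := by
              have he : (x + z + s • v) - (x + z + t • v) = (s - t) • v := by
                rw [sub_smul]; abel
              rw [he, norm_smul, Real.norm_eq_abs, mul_comm |s - t|]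
          _ = ↑(K * ‖v‖₊) * dist s t := by
              rw [Real.dist_eq]
              push_cast [coe_nnnorm]
              ring
      obtain ⟨ψ, hψlip, hψeq⟩ := hφlip.extend_real
      have hae : ∀ᵐ t : ℝ, t ∈ Ioo (0:ℝ) 1 → HasDerivAt ψ 0 t := by
        filter_upwards [measure_eq_zero_iff_ae_notMem.mp hz] with t ht htI
        have hmem : x + z + t • v ∈ U := memU t (Ioo_subset_Icc_self htI)
        have hfd : HasFDerivAt g (0 : EuclideanSpace ℝ (Fin n) →L[ℝ] EuclideanSpace ℝ (Fin m)) (x + z + t • v) := hN' _ ht hmem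
        have hγ : HasDerivAt (fun t : ℝ => x + z + t • v) v t := by
          simpa using ((hasDerivAt_id t).smul_const v).const_add (x + z)
        have h1 : HasDerivAt (fun t : ℝ => g (x + z + t • v)) 0 t := by
          have := hfd.comp_hasDerivAt t hγ
          simp only [ContinuousLinearMap.zero_apply] at this
          exact this
        have h2 : HasDerivAt φ 0 t := by
          have := (EuclideanSpace.proj i).hasFDerivAt.comp_hasDerivAt t h1
          simp only [map_zero] at this
          exact this
        refine h2.congr_of_eventuallyEq ?_
        filter_upwards [Icc_mem_nhds htI.1 htI.2] with s hs
        exact (hψeq hs).symm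
      have h10 := lip1d hψlip hae
      rw [← hψeq (right_mem_Icc.2 zero_le_one), ← hψeq (left_mem_Icc.2 zero_le_one)] at h10
      simpa [hφdef] using h10
    ext i
    exact hcoord i
  -- limiting argument
  apply eq_of_forall_dist_le
  intro η hη
  have hyU : y ∈ U := hball hy
  have hxU : x ∈ U := hball (mem_ball_self hε)
  have hcy : ContinuousAt g y := hgc.continuousAt (hUopen.mem_nhds hyU)
  have hcx : ContinuousAt g x := hgc.continuousAt (hUopen.mem_nhds hxU)
  obtain ⟨δ₁, hδ₁, hc₁⟩ := Metric.continuousAt_iff.mp hcy (η/2) (by linarith)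
  obtain ⟨δ₂, hδ₂, hc₂⟩ := Metric.continuousAt_iff.mp hcx (η/2) (by linarith)
  set r : ℝ := min δ (min δ₁ δ₂) with hrdef
  have hr : 0 < r := lt_min hδ (lt_min hδ₁ hδ₂)
  -- find a good z in ball 0 r
  have hGc0 : volume {z : EuclideanSpace ℝ (Fin n) | ¬ volume {t : ℝ | x + z + t • v ∈ N'} = 0} = 0 := hG
  have hbpos : volume (ball (0:EuclideanSpace ℝ (Fin n)) r) ≠ 0 := (measure_ball_pos volume 0 hr).ne'
  have hns : ¬ ball (0:EuclideanSpace ℝ (Fin n)) r ⊆ {z : EuclideanSpace ℝ (Fin n) | ¬ volume {t : ℝ | x + z + t • v ∈ N'} = 0} :=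
    fun hsub => hbpos (measure_mono_null hsub hGc0)
  obtain ⟨z, hz1, hz2⟩ := not_subset.mp hns
  rw [mem_setOf_eq, not_not] at hz2
  have hznorm : ‖z‖ < r := by simpa [dist_eq_norm] using mem_ball.mp hz1
  have hkey := key z hz2 (lt_of_lt_of_le hznorm (min_le_left _ _))
  have hpt : x + z + v = y + z := by simp only [hvdef]; abel
  rw [hpt] at hkey
  calc dist (g y) (g x) ≤ dist (g y) (g (y + z)) + dist (g (y + z)) (g x) := dist_triangle _ _ _
    _ = dist (g (y + z)) (g y) + dist (g (x + z)) (g x) := by rw [dist_comm, hkey]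
    _ ≤ η/2 + η/2 := by
        have h1 : dist (y + z) y < δ₁ := by
          simpa [dist_eq_norm] using lt_of_lt_of_le hznorm
            ((min_le_right _ _).trans (min_le_left _ _))
        have h2 : dist (x + z) x < δ₂ := by
          simpa [dist_eq_norm] using lt_of_lt_of_le hznorm
            ((min_le_right _ _).trans (min_le_right _ _))
        exact add_le_add (hc₁ h1).le (hc₂ h2).le
    _ = η := by ring

/-- A Lipschitz map on a connected open set `U ⊆ ℝ^n` whose total
derivative equals a fixed linear map `T` at Lebesgue-almost every point of `U` is affine:
if `f(x₀) = y₀` then `f(x) = T(x - x₀) + y₀` on `U`. -/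
theorem statement7 (n m : ℕ) (hn : 0 < n) (hm : 0 < m)
    (U : Set (EuclideanSpace ℝ (Fin n))) (hUopen : IsOpen U) (hUconn : IsConnected U)
    (f : EuclideanSpace ℝ (Fin n) → EuclideanSpace ℝ (Fin m)) (L : ℝ≥0)
    (hf : LipschitzOnWith L f U)
    (T : EuclideanSpace ℝ (Fin n) →L[ℝ] EuclideanSpace ℝ (Fin m))
    (hT : ∀ᵐ x ∂(volume : Measure (EuclideanSpace ℝ (Fin n))), x ∈ U → HasFDerivAt f T x)
    (x₀ : EuclideanSpace ℝ (Fin n)) (hx₀ : x₀ ∈ U)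
    (y₀ : EuclideanSpace ℝ (Fin m)) (hy₀ : f x₀ = y₀) :
    ∀ x ∈ U, f x = T (x - x₀) + y₀ := by
  set g : EuclideanSpace ℝ (Fin n) → EuclideanSpace ℝ (Fin m) := fun w => f w - T w with hgdef
  set K : ℝ≥0 := L + ‖T‖₊ with hKdef
  have hg : ∀ a ∈ U, ∀ b ∈ U, ‖g a - g b‖ ≤ K * ‖a - b‖ := by
    intro a ha b hb
    have h1 : ‖f a - f b‖ ≤ L * ‖a - b‖ := by
      have := hf.dist_le_mul a ha b hb
      rwa [dist_eq_norm, dist_eq_norm] at this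
    have h2 : ‖T a - T b‖ ≤ ‖T‖ * ‖a - b‖ := by
      rw [← map_sub]; exact T.le_opNorm _
    calc ‖g a - g b‖ = ‖(f a - f b) - (T a - T b)‖ := by simp only [hgdef]; congr 1; abel
      _ ≤ ‖f a - f b‖ + ‖T a - T b‖ := norm_sub_le _ _
      _ ≤ L * ‖a - b‖ + ‖T‖ * ‖a - b‖ := add_le_add h1 h2
      _ = K * ‖a - b‖ := by
          simp only [hKdef]
          push_cast [coe_nnnorm]
          ring
  have hgc : ContinuousOn g U := hf.continuousOn.sub T.continuous.continuousOn
  have hgd : ∀ᵐ w : EuclideanSpace ℝ (Fin n) ∂volume, w ∈ U →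
      HasFDerivAt g (0 : EuclideanSpace ℝ (Fin n) →L[ℝ] EuclideanSpace ℝ (Fin m)) w := by
    filter_upwards [hT] with w hw hwU
    have := (hw hwU).sub T.hasFDerivAt
    rw [sub_self] at this
    exact this
  -- local constancy gives openness of level sets
  have hloc : ∀ w ∈ U, ∃ ε > 0, ball w ε ⊆ U ∧ ∀ y ∈ ball w ε, g y = g w := by
    intro w hw
    obtain ⟨ε, hε, hb⟩ := Metric.isOpen_iff.mp hUopen w hw
    exact ⟨ε, hε, hb, local_const hUopen K hg hgc hgd hε hb⟩
  set S₁ : Set (EuclideanSpace ℝ (Fin n)) := {w | w ∈ U ∧ g w = g x₀} with hS₁def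
  set S₂ : Set (EuclideanSpace ℝ (Fin n)) := {w | w ∈ U ∧ g w ≠ g x₀} with hS₂def
  have hS₁open : IsOpen S₁ := by
    rw [Metric.isOpen_iff]
    rintro w ⟨hwU, hwg⟩
    obtain ⟨ε, hε, hb, hc⟩ := hloc w hwU
    exact ⟨ε, hε, fun y hy => ⟨hb hy, (hc y hy).trans hwg⟩⟩
  have hS₂open : IsOpen S₂ := by
    rw [Metric.isOpen_iff]
    rintro w ⟨hwU, hwg⟩
    obtain ⟨ε, hε, hb, hc⟩ := hloc w hwU
    exact ⟨ε, hε, fun y hy => ⟨hb hy, (hc y hy).symm ▸ hwg⟩⟩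
  have hdisj : Disjoint S₁ S₂ := by
    rw [Set.disjoint_iff]
    rintro w ⟨⟨_, h1⟩, ⟨_, h2⟩⟩
    exact (h2 h1).elim
  have hcover : U ⊆ S₁ ∪ S₂ := by
    intro w hw
    by_cases h : g w = g x₀
    · exact Or.inl ⟨hw, h⟩
    · exact Or.inr ⟨hw, h⟩
  have hsub : U ⊆ S₁ :=
    hUconn.isPreconnected.subset_left_of_subset_union hS₁open hS₂open hdisj hcover
      ⟨x₀, hx₀, hx₀, rfl⟩
  intro x hx
  have hgx : g x = g x₀ := (hsub hx).2
  have h' : f x - T x = f x₀ - T x₀ := hgx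
  calc f x = (f x - T x) + T x := by abel
    _ = (f x₀ - T x₀) + T x := by rw [h']
    _ = T (x - x₀) + y₀ := by rw [map_sub, ← hy₀]; abel
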